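/- Let G be a complete k-partite graph with n vertices (each of the k parts nonempty). Then the Smith normal form of the adjacency matrix A(G) is the diagonal matrix with k−1 ones, followed by the entry k−1, followed by n−k zeros. -/

import Mathlib

open Matrix Finset

namespace SNFAux

lemma sum_indicator_le {n : ℕ} (B : ℕ) (hB : B < n) :
    (∑ w : Fin n, if (w : ℕ) ≤ B then (1:ℤ) else 0) = (B : ℤ) + 1 := by
  rw [Fin.sum_univ_eq_sum_range (fun j => if j ≤ B then (1:ℤ) else 0) n]
  have h : Finset.filter (fun j => j ≤ B) (Finset.range n) = Finset.range (B+1) := by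
    ext j; simp only [Finset.mem_filter, Finset.mem_range]; omega
  rw [← Finset.sum_filter, h, Finset.sum_const, Finset.card_range]
  ring

variable {n k : ℕ}

section defs
variable {n k : ℕ}

/-- adjacency matrix -/
def Amat (p : Fin n → Fin k) : Matrix (Fin n) (Fin n) ℤ :=
  Matrix.of fun u v => if p u = p v then (0 : ℤ) else 1

def Nmat (p : Fin n → Fin k) (r : Fin k → Fin n) : Matrix (Fin n) (Fin n) ℤ :=
  Matrix.of fun u w => if r (p u) = u then 0 else if w = r (p u) then (1:ℤ) else 0

def Nmat' (p : Fin n → Fin k) (r : Fin k → Fin n) : Matrix (Fin n) (Fin n) ℤ :=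
  Matrix.of fun w v => if r (p v) = v then 0 else if w = r (p v) then (1:ℤ) else 0

def A1mat (p : Fin n → Fin k) (r : Fin k → Fin n) : Matrix (Fin n) (Fin n) ℤ :=
  Matrix.of fun u v => if r (p u) = u then (if p u = p v then 0 else (1:ℤ)) else 0

def Mmat (p : Fin n → Fin k) (r : Fin k → Fin n) : Matrix (Fin n) (Fin n) ℤ :=
  Matrix.of fun u v => if r (p u) = u ∧ r (p v) = v ∧ p u ≠ p v then (1:ℤ) else 0

def M2mat (n k : ℕ) : Matrix (Fin n) (Fin n) ℤ :=
  Matrix.of fun u v => if (u:ℕ) < k ∧ (v:ℕ) < k ∧ u ≠ v then (1:ℤ) else 0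

def Pperm (π : Equiv.Perm (Fin n)) : Matrix (Fin n) (Fin n) ℤ :=
  Matrix.of fun u w => if π.symm u = w then (1:ℤ) else 0

def Qperm (π : Equiv.Perm (Fin n)) : Matrix (Fin n) (Fin n) ℤ :=
  Matrix.of fun w v => if π w = v then (1:ℤ) else 0

def P1mat (n k : ℕ) : Matrix (Fin n) (Fin n) ℤ :=
  Matrix.of fun a b => if (a:ℕ) < k-1 then
    ((if (b:ℕ) = (a:ℕ)+1 then (1:ℤ) else 0) - (if b = a then 1 else 0))
    else (if b = a then (1:ℤ) else 0)

def Q2mat (n k : ℕ) : Matrix (Fin n) (Fin n) ℤ :=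
  Matrix.of fun a b => if (a:ℕ) < k ∧ (b:ℕ) < k then (if (a:ℕ) ≤ (b:ℕ) then (1:ℤ) else 0)
    else (if b = a then (1:ℤ) else 0)

def Cmat (n k : ℕ) : Matrix (Fin n) (Fin n) ℤ :=
  Matrix.of fun a v => if (a:ℕ) < k-1 then
      ((if v = a then (1:ℤ) else 0) - (if (v:ℕ) = (a:ℕ)+1 then 1 else 0))
    else if (a:ℕ) = k-1 then (if (v:ℕ) < k ∧ v ≠ a then (1:ℤ) else 0) else 0

def Dmat (n k : ℕ) : Matrix (Fin n) (Fin n) ℤ :=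
  Matrix.of fun a b => if (a:ℕ) < k-1 then (if b = a then (1:ℤ) else 0)
    else if (a:ℕ) = k-1 then
      (if (b:ℕ) < k then ((b:ℕ)+1 : ℤ) - (if (b:ℕ) = k-1 then 1 else 0) else 0)
    else 0

def P2mat (n k : ℕ) : Matrix (Fin n) (Fin n) ℤ :=
  Matrix.of fun a b => if (a:ℕ) = k-1 ∧ (b:ℕ) < k-1 then -(((b:ℕ):ℤ)+1)
    else if b = a then 1 else 0

def Diag (n k : ℕ) : Matrix (Fin n) (Fin n) ℤ :=
  Matrix.diagonal (fun i : Fin n =>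
    if (i : ℕ) < k - 1 then 1 else if (i : ℕ) = k - 1 then (k : ℤ) - 1 else 0)

end defs

section lems
variable {p : Fin n → Fin k} {r : Fin k → Fin n} {π : Equiv.Perm (Fin n)}
variable (hk : 1 ≤ k) (hkn : k ≤ n) (hpr : ∀ i, p (r i) = i)

lemma step1a (hpr : ∀ i, p (r i) = i) : (1 - Nmat p r) * Amat p = A1mat p r := by
  rw [sub_mul, one_mul]
  ext u v
  simp only [Matrix.sub_apply, Matrix.mul_apply, A1mat, Amat, Nmat, Matrix.of_apply]
  by_cases hru : r (p u) = u
  · simp [hru]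
  · simp only [if_neg hru]
    have hs : ∀ w, (if w = r (p u) then (1:ℤ) else 0) *
        (if p w = p v then (0:ℤ) else 1) =
        (if w = r (p u) then (if p w = p v then (0:ℤ) else 1) else 0) := by
      intro w; split_ifs <;> ring
    rw [Finset.sum_congr rfl (fun w _ => hs w), Finset.sum_ite_eq']
    simp [hpr]

lemma step1b (hpr : ∀ i, p (r i) = i) : A1mat p r * (1 - Nmat' p r) = Mmat p r := by
  rw [mul_sub, mul_one]
  ext u v
  simp only [Matrix.sub_apply, Matrix.mul_apply, A1mat, Mmat, Nmat', Matrix.of_apply]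
  by_cases hrv : r (p v) = v
  · have h0 : ∀ w ∈ Finset.univ, (if r (p u) = u then (if p u = p w then (0:ℤ) else 1) else 0)
        * (if r (p v) = v then (0:ℤ) else if w = r (p v) then 1 else 0) = 0 := by
      intro w _; rw [if_pos hrv, mul_zero]
    rw [Finset.sum_eq_zero h0, sub_zero]
    split_ifs <;> first | rfl | (exfalso; tauto)
  · simp only [if_neg hrv]
    have hs : ∀ w, (if r (p u) = u then (if p u = p w then (0:ℤ) else 1) else 0) *
        (if w = r (p v) then (1:ℤ) else 0) =
        (if w = r (p v) then (if r (p u) = u then (if p u = p w then (0:ℤ) else 1) else 0)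
          else 0) := by
      intro w; split_ifs <;> ring
    rw [Finset.sum_congr rfl (fun w _ => hs w), Finset.sum_ite_eq']
    simp only [Finset.mem_univ, if_pos, hpr]
    have : (if r (p u) = u ∧ r (p v) = v ∧ p u ≠ p v then (1:ℤ) else 0) = 0 := by
      split_ifs with h
      · exact absurd h.2.1 hrv
      · rfl
    rw [this]
    ring

lemma nsq (hpr : ∀ i, p (r i) = i) : Nmat p r * Nmat p r = 0 := by
  ext u v
  simp only [Matrix.mul_apply, Nmat, Matrix.of_apply, Matrix.zero_apply]
  by_cases hru : r (p u) = u
  · simp [hru]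
  · simp only [if_neg hru]
    have hs : ∀ w, (if w = r (p u) then (1:ℤ) else 0) *
        (if r (p w) = w then 0 else if v = r (p w) then (1:ℤ) else 0) =
        (if w = r (p u) then
          (if r (p w) = w then 0 else if v = r (p w) then (1:ℤ) else 0) else 0) := by
      intro w; split_ifs <;> ring
    rw [Finset.sum_congr rfl (fun w _ => hs w), Finset.sum_ite_eq']
    simp [hpr]

lemma nsq' (hpr : ∀ i, p (r i) = i) : Nmat' p r * Nmat' p r = 0 := by
  ext u v
  simp only [Matrix.mul_apply, Nmat', Matrix.of_apply, Matrix.zero_apply]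
  by_cases hrv : r (p v) = v
  · simp [hrv]
  · simp only [if_neg hrv]
    have hs : ∀ w, (if r (p w) = w then (0:ℤ) else if u = r (p w) then 1 else 0) *
        (if w = r (p v) then (1:ℤ) else 0) =
        (if w = r (p v) then
          (if r (p w) = w then (0:ℤ) else if u = r (p w) then 1 else 0) else 0) := by
      intro w; split_ifs <;> ring
    rw [Finset.sum_congr rfl (fun w _ => hs w), Finset.sum_ite_eq']
    simp [hpr]

lemma unit_P0 (hpr : ∀ i, p (r i) = i) : IsUnit (1 - Nmat p r).det := by
  have h : (1 - Nmat p r) * (1 + Nmat p r) = 1 := by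
    have := nsq hpr
    noncomm_ring [this]
  have := congrArg Matrix.det h
  rw [Matrix.det_mul, Matrix.det_one] at this
  exact IsUnit.of_mul_eq_one _ this

lemma unit_Q0 (hpr : ∀ i, p (r i) = i) : IsUnit (1 - Nmat' p r).det := by
  have h : (1 + Nmat' p r) * (1 - Nmat' p r) = 1 := by
    have := nsq' hpr
    noncomm_ring [this]
  have := congrArg Matrix.det h
  rw [Matrix.det_mul, Matrix.det_one] at this
  exact IsUnit.of_mul_eq_one _ (by rw [mul_comm] at this; exact this)

lemma key1 (hkn : k ≤ n) (hpr : ∀ i, p (r i) = i)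
    (hπ : ∀ i : Fin k, π (r i) = ⟨i.1, lt_of_lt_of_le i.2 hkn⟩) (x : Fin n) :
    ((π x : Fin n) : ℕ) < k ↔ r (p x) = x := by
  constructor
  · intro h
    have hx : π (r ⟨(π x : Fin n).1, h⟩) = π x := by
      rw [hπ]
    have : r ⟨(π x : Fin n).1, h⟩ = x := π.injective hx
    rw [← this, hpr]
  · intro h
    have : π x = ⟨(p x).1, lt_of_lt_of_le (p x).2 hkn⟩ := by
      conv_lhs => rw [← h, hπ]
    rw [this]
    exact (p x).2

lemma step2 (hkn : k ≤ n) (hpr : ∀ i, p (r i) = i)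
    (hπ : ∀ i : Fin k, π (r i) = ⟨i.1, lt_of_lt_of_le i.2 hkn⟩) :
    Pperm π * Mmat p r * Qperm π = M2mat n k := by
  have key := key1 hkn hpr hπ
  ext u v
  simp only [Matrix.mul_apply, Pperm, Qperm, Mmat, M2mat, Matrix.of_apply]
  have hs1 : ∀ j, (∑ w, (if π.symm u = w then (1:ℤ) else 0) *
      (if r (p w) = w ∧ r (p j) = j ∧ p w ≠ p j then (1:ℤ) else 0)) =
      (if r (p (π.symm u)) = π.symm u ∧ r (p j) = j ∧ p (π.symm u) ≠ p j
        then (1:ℤ) else 0) := by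
    intro j
    have hs : ∀ w, (if π.symm u = w then (1:ℤ) else 0) *
        (if r (p w) = w ∧ r (p j) = j ∧ p w ≠ p j then (1:ℤ) else 0) =
        (if w = π.symm u then
          (if r (p w) = w ∧ r (p j) = j ∧ p w ≠ p j then (1:ℤ) else 0) else 0) := by
      intro w
      by_cases h : w = π.symm u
      · subst h; simp
      · rw [if_neg (fun hh => h hh.symm), if_neg h, zero_mul]
    rw [Finset.sum_congr rfl (fun w _ => hs w), Finset.sum_ite_eq']
    simp
  rw [Finset.sum_congr rfl (fun j _ => by rw [hs1 j])]
  have hs2 : ∀ j, (if r (p (π.symm u)) = π.symm u ∧ r (p j) = j ∧ p (π.symm u) ≠ p j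
      then (1:ℤ) else 0) * (if π j = v then (1:ℤ) else 0) =
      (if j = π.symm v then
        (if r (p (π.symm u)) = π.symm u ∧ r (p j) = j ∧ p (π.symm u) ≠ p j
          then (1:ℤ) else 0) else 0) := by
    intro j
    by_cases h : j = π.symm v
    · subst h; simp
    · have : π j ≠ v := fun hh => h (by rw [← hh, Equiv.symm_apply_apply])
      rw [if_neg this, mul_zero, if_neg h]
  rw [Finset.sum_congr rfl (fun j _ => hs2 j), Finset.sum_ite_eq']
  simp only [Finset.mem_univ, if_pos]
  have e1 : r (p (π.symm u)) = π.symm u ↔ (u:ℕ) < k := by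
    have := key (π.symm u); rw [Equiv.apply_symm_apply] at this; exact this.symm
  have e2 : r (p (π.symm v)) = π.symm v ↔ (v:ℕ) < k := by
    have := key (π.symm v); rw [Equiv.apply_symm_apply] at this; exact this.symm
  refine if_congr ?_ rfl rfl
  constructor
  · rintro ⟨a, b, c⟩
    refine ⟨e1.1 a, e2.1 b, fun huv => c ?_⟩
    rw [huv]
  · rintro ⟨a, b, c⟩
    have ha := e1.2 a
    have hb := e2.2 b
    refine ⟨ha, hb, fun hpp => c ?_⟩
    have : π.symm u = π.symm v := by rw [← ha, ← hb, hpp]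
    exact π.symm.injective this

lemma unit_Pperm : IsUnit (Pperm π).det := by
  have h : Pperm π = Equiv.Perm.permMatrix ℤ π.symm := by
    ext u w
    simp [Pperm, Equiv.Perm.permMatrix, PEquiv.toMatrix_apply, Equiv.toPEquiv_apply,
      Option.mem_def]
  rw [h, Matrix.det_permutation]
  exact (Equiv.Perm.sign π.symm).isUnit

lemma unit_Qperm : IsUnit (Qperm π).det := by
  have h : Qperm π = Equiv.Perm.permMatrix ℤ π := by
    ext u w
    simp [Qperm, Equiv.Perm.permMatrix, PEquiv.toMatrix_apply, Equiv.toPEquiv_apply,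
      Option.mem_def]
  rw [h, Matrix.det_permutation]
  exact (Equiv.Perm.sign π).isUnit

lemma step3a (hk : 1 ≤ k) (hkn : k ≤ n) : P1mat n k * M2mat n k = Cmat n k := by
  ext a v
  simp only [Matrix.mul_apply, P1mat, M2mat, Cmat, Matrix.of_apply]
  by_cases ha : (a:ℕ) < k - 1
  · simp only [if_pos ha]
    have hlt : (a:ℕ)+1 < n := by omega
    have hcond : ∀ w : Fin n, ((w:ℕ) = (a:ℕ)+1) ↔ w = (⟨(a:ℕ)+1, hlt⟩ : Fin n) := by
      intro w; rw [Fin.ext_iff]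
    simp only [hcond]
    have hs : ∀ w : Fin n, ((if w = (⟨(a:ℕ)+1, hlt⟩ : Fin n) then (1:ℤ) else 0)
          - (if w = a then 1 else 0)) *
        (if (w:ℕ) < k ∧ (v:ℕ) < k ∧ w ≠ v then (1:ℤ) else 0) =
        (if w = (⟨(a:ℕ)+1, hlt⟩ : Fin n) then
          (if (w:ℕ) < k ∧ (v:ℕ) < k ∧ w ≠ v then (1:ℤ) else 0) else 0)
        - (if w = a then
          (if (w:ℕ) < k ∧ (v:ℕ) < k ∧ w ≠ v then (1:ℤ) else 0) else 0) := by
      intro w; split_ifs <;> ring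
    rw [Finset.sum_congr rfl (fun w _ => hs w), Finset.sum_sub_distrib,
      Finset.sum_ite_eq', Finset.sum_ite_eq']
    simp only [Finset.mem_univ, if_pos]
    simp only [ne_eq, Fin.ext_iff]
    split_ifs <;> omega
  · simp only [if_neg ha]
    have hs : ∀ w : Fin n, (if w = a then (1:ℤ) else 0) *
        (if (w:ℕ) < k ∧ (v:ℕ) < k ∧ w ≠ v then (1:ℤ) else 0) =
        (if w = a then
          (if (w:ℕ) < k ∧ (v:ℕ) < k ∧ w ≠ v then (1:ℤ) else 0) else 0) := by
      intro w; split_ifs <;> ring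
    rw [Finset.sum_congr rfl (fun w _ => hs w), Finset.sum_ite_eq']
    simp only [Finset.mem_univ, if_pos]
    simp only [ne_eq, Fin.ext_iff]
    split_ifs <;> omega

lemma step3b (hk : 1 ≤ k) (hkn : k ≤ n) : Cmat n k * Q2mat n k = Dmat n k := by
  ext a b
  simp only [Matrix.mul_apply, Cmat, Q2mat, Dmat, Matrix.of_apply]
  by_cases ha : (a:ℕ) < k - 1
  · simp only [if_pos ha]
    have hlt : (a:ℕ)+1 < n := by omega
    have hcond : ∀ w : Fin n, ((w:ℕ) = (a:ℕ)+1) ↔ w = (⟨(a:ℕ)+1, hlt⟩ : Fin n) := by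
      intro w; rw [Fin.ext_iff]
    simp only [hcond]
    have hs : ∀ w : Fin n, ((if w = a then (1:ℤ) else 0)
          - (if w = (⟨(a:ℕ)+1, hlt⟩ : Fin n) then 1 else 0)) *
        (if (w:ℕ) < k ∧ (b:ℕ) < k then (if (w:ℕ) ≤ (b:ℕ) then (1:ℤ) else 0)
          else if b = w then 1 else 0) =
        (if w = a then (if (w:ℕ) < k ∧ (b:ℕ) < k then (if (w:ℕ) ≤ (b:ℕ) then (1:ℤ) else 0)
          else if b = w then 1 else 0) else 0)
        - (if w = (⟨(a:ℕ)+1, hlt⟩ : Fin n) then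
          (if (w:ℕ) < k ∧ (b:ℕ) < k then (if (w:ℕ) ≤ (b:ℕ) then (1:ℤ) else 0)
          else if b = w then 1 else 0) else 0) := by
      intro w; split_ifs <;> ring
    rw [Finset.sum_congr rfl (fun w _ => hs w), Finset.sum_sub_distrib,
      Finset.sum_ite_eq', Finset.sum_ite_eq']
    simp only [Finset.mem_univ, if_pos]
    simp only [ne_eq, Fin.ext_iff]
    split_ifs <;> omega
  · by_cases haa : (a:ℕ) = k - 1
    · simp only [if_neg ha, if_pos haa]
      by_cases hb : (b:ℕ) < k
      · have hs : ∀ w : Fin n, (if (w:ℕ) < k ∧ w ≠ a then (1:ℤ) else 0) *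
            (if (w:ℕ) < k ∧ (b:ℕ) < k then (if (w:ℕ) ≤ (b:ℕ) then (1:ℤ) else 0)
              else if b = w then 1 else 0) =
            (if (w:ℕ) ≤ (b:ℕ) then (1:ℤ) else 0)
            - (if w = a then (if (a:ℕ) ≤ (b:ℕ) then (1:ℤ) else 0) else 0) := by
          intro w
          simp only [ne_eq, Fin.ext_iff]
          split_ifs <;> (first | ring1 | omega)
        rw [Finset.sum_congr rfl (fun w _ => hs w), Finset.sum_sub_distrib,
          sum_indicator_le (b:ℕ) b.2, Finset.sum_ite_eq']
        simp only [Finset.mem_univ, if_pos]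
        split_ifs <;> omega
      · have h0 : ∀ w ∈ (Finset.univ : Finset (Fin n)), (if (w:ℕ) < k ∧ w ≠ a then (1:ℤ) else 0) *
            (if (w:ℕ) < k ∧ (b:ℕ) < k then (if (w:ℕ) ≤ (b:ℕ) then (1:ℤ) else 0)
              else if b = w then 1 else 0) = 0 := by
          intro w _
          simp only [ne_eq, Fin.ext_iff]
          split_ifs <;> (first | ring1 | omega)
        rw [Finset.sum_eq_zero h0, if_neg hb]
    · simp only [if_neg ha, if_neg haa]
      simp

lemma step3c (hk : 1 ≤ k) (hkn : k ≤ n) : P2mat n k * Dmat n k = Diag n k := by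
  ext a v
  simp only [Matrix.mul_apply, P2mat, Dmat, Diag, Matrix.of_apply, Matrix.diagonal_apply]
  by_cases haa : (a:ℕ) = k - 1
  · have hs : ∀ w : Fin n, (if (a:ℕ) = k-1 ∧ (w:ℕ) < k-1 then -(((w:ℕ):ℤ)+1)
          else if w = a then 1 else 0) *
        (if (w:ℕ) < k-1 then (if v = w then (1:ℤ) else 0)
          else if (w:ℕ) = k-1 then
            (if (v:ℕ) < k then ((v:ℕ)+1 : ℤ) - (if (v:ℕ) = k-1 then 1 else 0) else 0)
          else 0) =
        (if w = v then (if (w:ℕ) < k-1 then -(((w:ℕ):ℤ)+1) else 0) else 0)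
        + (if w = a then
            (if (v:ℕ) < k then ((v:ℕ)+1 : ℤ) - (if (v:ℕ) = k-1 then 1 else 0) else 0)
          else 0) := by
      intro w
      simp only [ne_eq, Fin.ext_iff]
      split_ifs <;> (first | ring1 | omega)
    rw [Finset.sum_congr rfl (fun w _ => hs w), Finset.sum_add_distrib,
      Finset.sum_ite_eq', Finset.sum_ite_eq']
    simp only [Finset.mem_univ, if_pos]
    simp only [Fin.ext_iff]
    split_ifs <;> omega
  · have hs : ∀ w : Fin n, (if (a:ℕ) = k-1 ∧ (w:ℕ) < k-1 then -(((w:ℕ):ℤ)+1)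
          else if w = a then 1 else 0) *
        (if (w:ℕ) < k-1 then (if v = w then (1:ℤ) else 0)
          else if (w:ℕ) = k-1 then
            (if (v:ℕ) < k then ((v:ℕ)+1 : ℤ) - (if (v:ℕ) = k-1 then 1 else 0) else 0)
          else 0) =
        (if w = a then
          (if (w:ℕ) < k-1 then (if v = w then (1:ℤ) else 0)
          else if (w:ℕ) = k-1 then
            (if (v:ℕ) < k then ((v:ℕ)+1 : ℤ) - (if (v:ℕ) = k-1 then 1 else 0) else 0)
          else 0) else 0) := by
      intro w
      rw [if_neg (fun h => haa h.1)]
      split_ifs <;> ring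
    rw [Finset.sum_congr rfl (fun w _ => hs w), Finset.sum_ite_eq']
    simp only [Finset.mem_univ, if_pos]
    simp only [ne_eq, Fin.ext_iff]
    split_ifs <;> omega

lemma unit_P1 : IsUnit (P1mat n k).det := by
  have h : (P1mat n k).BlockTriangular id := by
    intro i j hij
    have hji : (j:ℕ) < (i:ℕ) := hij
    simp only [P1mat, Matrix.of_apply]
    simp only [Fin.ext_iff]
    split_ifs <;> omega
  rw [Matrix.det_of_upperTriangular h]
  have hsq : (∏ a : Fin n, P1mat n k a a) * (∏ a : Fin n, P1mat n k a a) = 1 := by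
    rw [← Finset.prod_mul_distrib]
    apply Finset.prod_eq_one
    intro a _
    simp only [P1mat, Matrix.of_apply, Fin.ext_iff]
    split_ifs <;> (first | ring1 | omega)
  exact IsUnit.of_mul_eq_one _ hsq

lemma unit_Q2 : IsUnit (Q2mat n k).det := by
  have h : (Q2mat n k).BlockTriangular id := by
    intro i j hij
    have hji : (j:ℕ) < (i:ℕ) := hij
    simp only [Q2mat, Matrix.of_apply]
    simp only [Fin.ext_iff]
    split_ifs <;> omega
  rw [Matrix.det_of_upperTriangular h]
  have h1 : (∏ a : Fin n, Q2mat n k a a) = 1 := by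
    apply Finset.prod_eq_one
    intro a _
    simp only [Q2mat, Matrix.of_apply, Fin.ext_iff]
    split_ifs <;> (first | ring1 | omega)
  rw [h1]; exact isUnit_one

lemma unit_P2 : IsUnit (P2mat n k).det := by
  have h : (P2mat n k).BlockTriangular OrderDual.toDual := by
    intro i j hij
    have hji : (i:ℕ) < (j:ℕ) := hij
    simp only [P2mat, Matrix.of_apply]
    simp only [Fin.ext_iff]
    split_ifs <;> omega
  rw [Matrix.det_of_lowerTriangular _ h]
  have h1 : (∏ a : Fin n, P2mat n k a a) = 1 := by
    apply Finset.prod_eq_one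
    intro a _
    simp only [P2mat, Matrix.of_apply, Fin.ext_iff]
    split_ifs <;> (first | ring1 | omega)
  rw [h1]; exact isUnit_one

end lems

end SNFAux

theorem snf_complete_multipartite (n k : ℕ) (hk : 1 ≤ k)
    (p : Fin n → Fin k) (hp : Function.Surjective p) :
    ∃ P Q : Matrix (Fin n) (Fin n) ℤ, IsUnit P.det ∧ IsUnit Q.det ∧
      P * (Matrix.of fun u v => if p u = p v then (0 : ℤ) else 1) * Q =
        Matrix.diagonal (fun i : Fin n =>
          if (i : ℕ) < k - 1 then 1 else if (i : ℕ) = k - 1 then (k : ℤ) - 1 else 0) := by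
  classical
  obtain ⟨r, hpr, hrinj, hkn⟩ : ∃ r : Fin k → Fin n, (∀ i, p (r i) = i) ∧
      Function.Injective r ∧ k ≤ n := by
    refine ⟨Function.surjInv hp, fun i => Function.surjInv_eq hp i,
      Function.injective_surjInv hp, ?_⟩
    have := Fintype.card_le_of_surjective p hp
    simpa using this
  -- build the permutation
  obtain ⟨π, hπ⟩ : ∃ π : Equiv.Perm (Fin n),
      ∀ i : Fin k, π (r i) = ⟨i.1, lt_of_lt_of_le i.2 hkn⟩ := by
    let e2 : Fin k ≃ {x : Fin n // (x:ℕ) < k} :=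
      { toFun := fun i => ⟨⟨i.1, lt_of_lt_of_le i.2 hkn⟩, i.2⟩
        invFun := fun x => ⟨(x.1:ℕ), x.2⟩
        left_inv := fun i => rfl
        right_inv := fun x => rfl }
    let e : {x : Fin n // x ∈ Set.range r} ≃ {x : Fin n // (x:ℕ) < k} :=
      (Equiv.ofInjective r hrinj).symm.trans e2
    refine ⟨e.extendSubtype, fun i => ?_⟩
    have hm : r i ∈ Set.range r := ⟨i, rfl⟩
    rw [Equiv.extendSubtype_apply_of_mem e (r i) hm]
    have h1 : (⟨r i, hm⟩ : {x : Fin n // x ∈ Set.range r})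
        = Equiv.ofInjective r hrinj i := rfl
    rw [h1]
    show (e2 ((Equiv.ofInjective r hrinj).symm ((Equiv.ofInjective r hrinj) i)) : Fin n) = _
    rw [Equiv.symm_apply_apply]
    rfl
  refine ⟨SNFAux.P2mat n k * SNFAux.P1mat n k * SNFAux.Pperm π * (1 - SNFAux.Nmat p r),
    (1 - SNFAux.Nmat' p r) * SNFAux.Qperm π * SNFAux.Q2mat n k, ?_, ?_, ?_⟩
  · simp only [Matrix.det_mul]
    exact ((SNFAux.unit_P2.mul SNFAux.unit_P1).mul SNFAux.unit_Pperm).mul (SNFAux.unit_P0 hpr)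
  · simp only [Matrix.det_mul]
    exact ((SNFAux.unit_Q0 hpr).mul SNFAux.unit_Qperm).mul SNFAux.unit_Q2
  · have hA : (Matrix.of fun u v => if p u = p v then (0 : ℤ) else 1) = SNFAux.Amat p := rfl
    rw [hA]
    have e1 : (1 - SNFAux.Nmat p r) * SNFAux.Amat p * (1 - SNFAux.Nmat' p r)
        = SNFAux.Mmat p r := by rw [SNFAux.step1a hpr, SNFAux.step1b hpr]
    have e2 := SNFAux.step2 hkn hpr hπ
    have e3a := SNFAux.step3a (k := k) hk hkn
    have e3b := SNFAux.step3b hk hkn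
    have e3c := SNFAux.step3c (n := n) hk hkn
    have final : SNFAux.Diag n k = Matrix.diagonal (fun i : Fin n =>
        if (i : ℕ) < k - 1 then 1 else if (i : ℕ) = k - 1 then (k : ℤ) - 1 else 0) := rfl
    rw [← final, ← e3c, ← e3b, ← e3a, ← e2]
    rw [← e1]
    noncomm_ring
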